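/- Let α > 0. If α < 2γ₀, then β = α/2 is the unique β ∈ (0, α) with λ'(β) = λ'(α − β). If α ≥ 2γ₀, then there is a unique p = p_{++2}(α) ∈ (0, γ₀] with λ'(p) = λ'(α − p), and the set {β ∈ (0, α) : λ'(β) = λ'(α − β)} equals {α/2, p, α − p}. -/

import Mathlib

/-!
`lam` is the gravity–capillary dispersion relation λ(x) = √(x + x³) (with g = σ = 1);
λ' denotes its derivative on (0, ∞); `gamma0` is γ₀ = √((2√3 − 3)/3).
-/

noncomputable section

open Real Set

/-- The dispersion relation λ(x) = √(x + x³). -/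
def lam (x : ℝ) : ℝ := Real.sqrt (x + x ^ 3)

/-- γ₀ = √((2√3 − 3)/3). -/
def gamma0 : ℝ := Real.sqrt ((2 * Real.sqrt 3 - 3) / 3)

/-- Auxiliary cubic: the symmetric factor of the equation λ'(β) = λ'(α−β),
expressed in `t = α²` and `u = β(α−β)`. -/
def Cp (t u : ℝ) : ℝ := 1 + t - (7 + 9 * t) * u + 15 * u ^ 2 - 9 * u ^ 3

lemma deriv_lam {x : ℝ} (hx : 0 < x) :
    deriv lam x = (1 + 3 * x ^ 2) / (2 * Real.sqrt (x + x ^ 3)) := by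
  have hx3 : (0:ℝ) < x + x ^ 3 := by positivity
  have h1 : HasDerivAt (fun y : ℝ => y + y ^ 3) (1 + 3 * x ^ 2) x := by
    have := (hasDerivAt_id x).add (hasDerivAt_pow 3 x)
    exact this.congr_deriv (by push_cast; ring)
  have h2 := (Real.hasDerivAt_sqrt hx3.ne').comp x h1
  have h3 : HasDerivAt lam (1 / (2 * Real.sqrt (x + x ^ 3)) * (1 + 3 * x ^ 2)) x := h2
  rw [h3.deriv]; ring

lemma deriv_lam_eq_iff {a b : ℝ} (ha : 0 < a) (hb : 0 < b) :
    deriv lam a = deriv lam b ↔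
      (1 + 3 * a ^ 2) ^ 2 * (b + b ^ 3) = (1 + 3 * b ^ 2) ^ 2 * (a + a ^ 3) := by
  have haa : (0:ℝ) < a + a ^ 3 := by positivity
  have hbb : (0:ℝ) < b + b ^ 3 := by positivity
  have hA : 0 < Real.sqrt (a + a ^ 3) := Real.sqrt_pos.mpr haa
  have hB : 0 < Real.sqrt (b + b ^ 3) := Real.sqrt_pos.mpr hbb
  have hA2 : Real.sqrt (a + a ^ 3) ^ 2 = a + a ^ 3 := Real.sq_sqrt haa.le
  have hB2 : Real.sqrt (b + b ^ 3) ^ 2 = b + b ^ 3 := Real.sq_sqrt hbb.le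
  set A := Real.sqrt (a + a ^ 3)
  set B := Real.sqrt (b + b ^ 3)
  rw [deriv_lam ha, deriv_lam hb, div_eq_div_iff (by positivity) (by positivity)]
  constructor
  · intro h
    have h' : (1 + 3 * a ^ 2) * B = (1 + 3 * b ^ 2) * A := by linarith
    linear_combination ((1 + 3 * a ^ 2) * B + (1 + 3 * b ^ 2) * A) * h'
      - (1 + 3 * a ^ 2) ^ 2 * hB2 + (1 + 3 * b ^ 2) ^ 2 * hA2
  · intro h
    have h2 : ((1 + 3 * a ^ 2) * B) ^ 2 = ((1 + 3 * b ^ 2) * A) ^ 2 := by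
      linear_combination h + (1 + 3 * a ^ 2) ^ 2 * hB2 - (1 + 3 * b ^ 2) ^ 2 * hA2
    have h' := (pow_left_inj₀ (by positivity) (by positivity) two_ne_zero).mp h2
    linear_combination 2 * h'

/-- The key reduction: for 0 < β < α, λ'(β) = λ'(α−β) iff (α−2β)·Cp(α²)(β(α−β)) = 0. -/
lemma key {α β : ℝ} (hβ : 0 < β) (hβα : β < α) :
    deriv lam β = deriv lam (α - β) ↔ (α - 2 * β) * Cp (α ^ 2) (β * (α - β)) = 0 := by
  rw [deriv_lam_eq_iff hβ (by linarith)]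
  unfold Cp
  constructor
  · intro h; linear_combination h
  · intro h; linear_combination h

lemma g0_sq : gamma0 ^ 2 = (2 * Real.sqrt 3 - 3) / 3 := by
  have h32 : (3:ℝ)/2 < Real.sqrt 3 := by
    rw [show (3:ℝ)/2 = Real.sqrt ((3/2)^2) by rw [Real.sqrt_sq]; norm_num]
    exact Real.sqrt_lt_sqrt (by positivity) (by norm_num)
  exact Real.sq_sqrt (by linarith)

lemma g0_pos : 0 < gamma0 := by
  have h32 : (3:ℝ)/2 < Real.sqrt 3 := by
    rw [show (3:ℝ)/2 = Real.sqrt ((3/2)^2) by rw [Real.sqrt_sq]; norm_num]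
    exact Real.sqrt_lt_sqrt (by positivity) (by norm_num)
  exact Real.sqrt_pos.mpr (by linarith)

lemma g0_quartic : 3 * gamma0 ^ 4 + 6 * gamma0 ^ 2 - 1 = 0 := by
  have hs : Real.sqrt 3 ^ 2 = 3 := Real.sq_sqrt (by norm_num)
  have hsq := g0_sq
  have h4 : gamma0 ^ 4 = ((2 * Real.sqrt 3 - 3) / 3) ^ 2 := by
    rw [show gamma0 ^ 4 = (gamma0 ^ 2) ^ 2 by ring, hsq]
  rw [h4, hsq]; linear_combination (4/3 : ℝ) * hs

lemma g0_sq_ge : (2:ℝ)/15 ≤ gamma0 ^ 2 := by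
  have h := g0_quartic
  nlinarith [sq_nonneg (gamma0 ^ 2), sq_nonneg (gamma0 ^ 2 - 2/15)]

/-- Cp is strictly decreasing on [0, t/4]. -/
lemma Cp_anti {t u v : ℝ} (hu : 0 ≤ u) (huv : u < v) (hv : 4 * v ≤ t) :
    Cp t v < Cp t u := by
  have h1 : 0 < 9 * t + 7 - 15 * (u + v) := by nlinarith
  have h2 : 0 < (v - u) * (9 * t + 7 - 15 * (u + v)) := mul_pos (by linarith) h1
  have h3 : 0 ≤ (v - u) * (9 * (u ^ 2 + u * v + v ^ 2)) := by
    apply mul_nonneg (by linarith)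
    nlinarith [sq_nonneg (u + v), sq_nonneg u, sq_nonneg v]
  have hkey : Cp t u - Cp t v
      = (v - u) * (9 * t + 7 - 15 * (u + v)) + (v - u) * (9 * (u ^ 2 + u * v + v ^ 2)) := by
    unfold Cp; ring
  linarith

/-- value of the cubic at the symmetric point u = t/4 -/
lemma Cp_quarter (t : ℝ) : Cp t (t / 4) = -(3 * t + 4) * (3 * t ^ 2 + 24 * t - 16) / 64 := by
  unfold Cp; ring

lemma disc_neg {α : ℝ} (hα : 0 < α) (h : α < 2 * gamma0) :
    3 * (α ^ 2) ^ 2 + 24 * α ^ 2 - 16 < 0 := by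
  have hg := g0_quartic
  have hg0 := g0_pos
  have h2 : α ^ 2 < 4 * gamma0 ^ 2 := by nlinarith
  nlinarith [sq_nonneg α, mul_pos (mul_pos hα hα) (mul_pos hg0 hg0)]

/-- Cp at u₀ = γ₀(α−γ₀) is ≤ 0 when α ≥ 2γ₀ -/
lemma Cp_u0 {α : ℝ} (hα : 0 < α) (h : 2 * gamma0 ≤ α) :
    Cp (α ^ 2) (gamma0 * (α - gamma0)) ≤ 0 := by
  have hg := g0_quartic
  have hg0 := g0_pos
  have h15 := g0_sq_ge
  have hkey : Cp (α ^ 2) (gamma0 * (α - gamma0))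
      = (α - 2 * gamma0) * (4 * α - 8 * gamma0 - 9 * gamma0 * α ^ 2 - 12 * gamma0 ^ 2 * α - 9 * gamma0 ^ 3 * α ^ 2)
        + (3 * gamma0 ^ 4 + 6 * gamma0 ^ 2 - 1) * (3 * α ^ 2 - 9 * gamma0 * α + 3 * gamma0 ^ 2 - 1) := by
    unfold Cp; ring
  have hD : 4 * α - 8 * gamma0 - 9 * gamma0 * α ^ 2 - 12 * gamma0 ^ 2 * α - 9 * gamma0 ^ 3 * α ^ 2 ≤ 0 := by
    nlinarith [mul_nonneg (mul_nonneg hg0.le hα.le) (by linarith : (0:ℝ) ≤ α - 2 * gamma0),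
      mul_nonneg (by linarith : (0:ℝ) ≤ gamma0 ^ 2 - 2/15) hα.le,
      mul_nonneg (mul_nonneg (pow_nonneg hg0.le 3) hα.le) hα.le]
  rw [hkey, g0_quartic, zero_mul, add_zero]
  nlinarith [mul_nonneg (by linarith : (0:ℝ) ≤ α - 2 * gamma0)
    (by linarith : (0:ℝ) ≤ -(4 * α - 8 * gamma0 - 9 * gamma0 * α ^ 2 - 12 * gamma0 ^ 2 * α - 9 * gamma0 ^ 3 * α ^ 2))]

set_option maxHeartbeats 2000000 in
/-- If α < 2γ₀ then β = α/2 is the unique β ∈ (0, α) with λ'(β) = λ'(α − β); if α ≥ 2γ₀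
then there is a unique p = p₊₊₂(α) ∈ (0, γ₀] with λ'(p) = λ'(α − p), and the solution set
{β ∈ (0, α) : λ'(β) = λ'(α − β)} equals {α/2, p, α − p}. -/
theorem stmt9 (α : ℝ) (hα : 0 < α) :
    (α < 2 * gamma0 →
      ∀ β ∈ Ioo 0 α, (deriv lam β = deriv lam (α - β) ↔ β = α / 2)) ∧
    (2 * gamma0 ≤ α →
      ∃ p : ℝ, p ∈ Ioc 0 gamma0 ∧ deriv lam p = deriv lam (α - p) ∧
        (∀ q ∈ Ioc 0 gamma0, deriv lam q = deriv lam (α - q) → q = p) ∧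
        {β : ℝ | β ∈ Ioo 0 α ∧ deriv lam β = deriv lam (α - β)} = {α / 2, p, α - p}) := by
  constructor
  · -- subcritical case
    intro h β hβ
    obtain ⟨hβ0, hβα⟩ := hβ
    rw [key hβ0 hβα]
    constructor
    · intro heq
      by_contra hne
      have hne2 : α - 2 * β ≠ 0 := fun hc => hne (by linarith)
      have hC : Cp (α ^ 2) (β * (α - β)) = 0 := by
        rcases mul_eq_zero.mp heq with h' | h'
        · exact absurd h' hne2
        · exact h'
      have hu1 : 0 < β * (α - β) := mul_pos hβ0 (by linarith)
      have hsq : 0 < (α - 2 * β) ^ 2 := by positivity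
      have hu2 : β * (α - β) < α ^ 2 / 4 := by nlinarith
      have h1 : Cp (α ^ 2) (α ^ 2 / 4) < Cp (α ^ 2) (β * (α - β)) :=
        Cp_anti hu1.le hu2 (by linarith)
      have h2 : 0 < Cp (α ^ 2) (α ^ 2 / 4) := by
        rw [Cp_quarter]
        have := disc_neg hα h
        nlinarith [sq_nonneg α]
      linarith [hC, h1, h2]
    · intro heq
      rw [heq, show α - 2 * (α / 2) = 0 by ring, zero_mul]
  · -- supercritical case
    intro h
    have hg0 := g0_pos
    have hgα : gamma0 ≤ α / 2 := by linarith
    have hu0pos : 0 < gamma0 * (α - gamma0) := mul_pos hg0 (by linarith)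
    have hu0le : 4 * (gamma0 * (α - gamma0)) ≤ α ^ 2 := by nlinarith [sq_nonneg (α - 2 * gamma0)]
    have hcont : ContinuousOn (Cp (α ^ 2)) (Icc 0 (gamma0 * (α - gamma0))) := by
      apply Continuous.continuousOn
      unfold Cp; continuity
    have hCp0 : 0 < Cp (α ^ 2) 0 := by unfold Cp; nlinarith [sq_nonneg α]
    obtain ⟨u, hu_mem, hu_eq⟩ :=
      intermediate_value_Icc' hu0pos.le hcont ⟨Cp_u0 hα h, hCp0.le⟩
    have hu_pos : 0 < u := by
      rcases eq_or_lt_of_le hu_mem.1 with hc | hc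
      · exfalso; rw [← hc] at hu_eq; linarith
      · exact hc
    have hu_t4 : 4 * u ≤ α ^ 2 := by
      have := hu_mem.2; linarith
    -- uniqueness of roots of the cubic in (0, α²/4]
    have huniq : ∀ u' : ℝ, 0 < u' → 4 * u' ≤ α ^ 2 → Cp (α ^ 2) u' = 0 → u' = u := by
      intro u' h1 h2 h3
      rcases lt_trichotomy u' u with hlt | heq | hgt
      · have := Cp_anti h1.le hlt hu_t4
        rw [h3, hu_eq] at this; exact absurd this (lt_irrefl 0)
      · exact heq
      · have := Cp_anti hu_pos.le hgt h2
        rw [h3, hu_eq] at this; exact absurd this (lt_irrefl 0)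
    -- construct p
    set s := Real.sqrt (α ^ 2 - 4 * u) with hsdef
    have hs_nonneg : 0 ≤ s := Real.sqrt_nonneg _
    have hs_sq : s ^ 2 = α ^ 2 - 4 * u := Real.sq_sqrt (by linarith)
    have hs_lt : s < α := by
      have h1 : s < Real.sqrt (α ^ 2) :=
        Real.sqrt_lt_sqrt (by linarith) (by linarith)
      rwa [Real.sqrt_sq hα.le] at h1
    set p := (α - s) / 2 with hpdef
    have hp_pos : 0 < p := by rw [hpdef]; linarith
    have hp_half : p ≤ α / 2 := by rw [hpdef]; linarith
    have hp_u : p * (α - p) = u := by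
      have h1 : p * (α - p) = (α ^ 2 - s ^ 2) / 4 := by rw [hpdef]; ring
      rw [h1, hs_sq]; ring
    have hp_le : p ≤ gamma0 := by
      by_contra hc
      push_neg at hc
      have hprod : 0 ≤ (gamma0 - p) * (α - gamma0 - p) := by
        have h1 : gamma0 * (α - gamma0) - p * (α - p) = (gamma0 - p) * (α - gamma0 - p) := by
          ring
        rw [← h1, hp_u]; linarith [hu_mem.2]
      have h1 : α - gamma0 - p ≤ 0 := by nlinarith
      linarith
    have hderiv_p : deriv lam p = deriv lam (α - p) := by
      rw [key hp_pos (by linarith), hp_u, hu_eq, mul_zero]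
    -- the general "solutions below α/2 are p" step
    have hsol : ∀ q : ℝ, 0 < q → q < α → (α - 2 * q) * Cp (α ^ 2) (q * (α - q)) = 0 →
        q = α / 2 ∨ q = p ∨ q = α - p := by
      intro q hq0 hqα heq
      by_cases hqhalf : q = α / 2
      · exact Or.inl hqhalf
      · have hC : Cp (α ^ 2) (q * (α - q)) = 0 := by
          rcases mul_eq_zero.mp heq with h' | h'
          · exact absurd (by linarith : q = α / 2) hqhalf
          · exact h'
        have hu1 : 0 < q * (α - q) := mul_pos hq0 (by linarith)
        have hu2 : 4 * (q * (α - q)) ≤ α ^ 2 := by nlinarith [sq_nonneg (α - 2 * q)]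
        have hequ : q * (α - q) = u := huniq _ hu1 hu2 hC
        have hquad : (q - p) * (q - (α - p)) = 0 := by
          linear_combination hp_u - hequ
        rcases mul_eq_zero.mp hquad with h' | h'
        · exact Or.inr (Or.inl (by linarith))
        · exact Or.inr (Or.inr (by linarith))
    refine ⟨p, ⟨hp_pos, hp_le⟩, hderiv_p, ?_, ?_⟩
    · -- uniqueness in (0, γ₀]
      rintro q ⟨hq0, hqg⟩ heq
      have hqα : q < α := by linarith
      rw [key hq0 hqα] at heq
      rcases hsol q hq0 hqα heq with h' | h' | h'
      · -- q = α/2 forces γ₀ = α/2 and p = α/2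
        have hγ : gamma0 = α / 2 := le_antisymm hgα (by linarith)
        have hdisc0 : 3 * (α ^ 2) ^ 2 + 24 * α ^ 2 - 16 = 0 := by
          have hq := g0_quartic
          rw [hγ] at hq
          linear_combination 16 * hq
        have hCq : Cp (α ^ 2) (α ^ 2 / 4) = 0 := by
          rw [Cp_quarter, hdisc0]; ring
        have h4 : α ^ 2 / 4 = u := huniq _ (by positivity) (by linarith) hCq
        have hp2 : (α - 2 * p) ^ 2 = 0 := by
          have := hp_u
          nlinarith [hp_u, h4]
        have : α = 2 * p := by nlinarith [hp2, sq_nonneg (α - 2 * p)]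
        rw [h', this]; ring
      · exact h'
      · -- q = α - p impossible unless q = p
        have h1 : q ≤ α / 2 := le_trans hqg hgα
        have h2 : α / 2 ≤ α - p := by linarith
        have h3 : q = α / 2 := by linarith [h', h2]
        have hγ : gamma0 = α / 2 := le_antisymm hgα (by linarith)
        have hp2 : p = α / 2 := by
          have : α - p = q := h'.symm
          linarith [hp_half, this, h3]
        linarith [h3, hp2]
    · -- the full solution set
      ext β
      simp only [mem_setOf_eq, mem_Ioo, mem_insert_iff, mem_singleton_iff]
      constructor
      · rintro ⟨⟨hβ0, hβα⟩, heq⟩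
        rw [key hβ0 hβα] at heq
        exact hsol β hβ0 hβα heq
      · rintro (h' | h' | h')
        · subst h'
          refine ⟨⟨by linarith, by linarith⟩, ?_⟩
          rw [show α - α / 2 = α / 2 by ring]
        · subst h'
          exact ⟨⟨hp_pos, by linarith⟩, hderiv_p⟩
        · subst h'
          refine ⟨⟨by linarith, by linarith⟩, ?_⟩
          rw [show α - (α - p) = p by ring]
          exact hderiv_p.symm

end
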